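/- Let r, σ, b > 0 and a ∈ ℝ with a < 0, σ = −a·r and r > 1. Set ξ = (σ·b/(2a²))·(a(r−2) − σ + √((σ − a·r)² + 4aσ)). Then ξ = r·b·(√(r(r−1)) − (r−1)) > 0, σ·b + a·ξ > 0, and the two points S± = (±x₁, ±y₁, z₁), where x₁ = σ·b·√ξ/(σ·b + a·ξ), y₁ = √ξ, z₁ = σ·ξ/(σ·b + a·ξ), are zeros of the vector field f of the Lorenz-like system (i.e., equilibria). -/

import Mathlib

/-- For the Lorenz-like system with `a < 0`, `σ = −a·r` and `r > 1` (Rabinovich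
case), the quantity `ξ = (σb/(2a²))·(a(r−2) − σ + √((σ − ar)² + 4aσ))` equals
`r·b·(√(r(r−1)) − (r−1)) > 0`, `σb + aξ > 0`, and the two symmetric points
`S± = (±x₁, ±y₁, z₁)` are equilibria. -/
theorem stmt_8 (r σ b a : ℝ) (hr : 0 < r) (hσ : 0 < σ) (hb : 0 < b)
    (ha : a < 0) (hσar : σ = -a * r) (hr1 : 1 < r) :
    let ξ := σ * b / (2 * a ^ 2) *
      (a * (r - 2) - σ + Real.sqrt ((σ - a * r) ^ 2 + 4 * a * σ))
    let x₁ := σ * b * Real.sqrt ξ / (σ * b + a * ξ)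
    let y₁ := Real.sqrt ξ
    let z₁ := σ * ξ / (σ * b + a * ξ)
    ξ = r * b * (Real.sqrt (r * (r - 1)) - (r - 1)) ∧ 0 < ξ ∧
    0 < σ * b + a * ξ ∧
    (-σ * (x₁ - y₁) - a * y₁ * z₁ = 0 ∧
      r * x₁ - y₁ - x₁ * z₁ = 0 ∧
      -b * z₁ + x₁ * y₁ = 0) ∧
    (-σ * (-x₁ - -y₁) - a * -y₁ * z₁ = 0 ∧
      r * -x₁ - -y₁ - -x₁ * z₁ = 0 ∧
      -b * z₁ + -x₁ * -y₁ = 0) := by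
  have ha' : a ≠ 0 := ne_of_lt ha
  set s := Real.sqrt (r * (r - 1)) with hs
  have hs0 : 0 ≤ s := Real.sqrt_nonneg _
  have hs2 : s ^ 2 = r * (r - 1) := Real.sq_sqrt (by nlinarith)
  have hsqrt : Real.sqrt ((σ - a * r) ^ 2 + 4 * a * σ) = -2 * a * s := by
    rw [show (σ - a * r) ^ 2 + 4 * a * σ = (-2 * a * s) ^ 2 by
      linear_combination (σ - 3 * a * r + 4 * a) * hσar + (-(4 * a ^ 2)) * hs2]
    exact Real.sqrt_sq (by nlinarith [mul_nonneg (neg_nonneg.mpr ha.le) hs0])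
  intro ξ x₁ y₁ z₁
  have hξdef : ξ = σ * b / (2 * a ^ 2) *
      (a * (r - 2) - σ + Real.sqrt ((σ - a * r) ^ 2 + 4 * a * σ)) := rfl
  have hx : x₁ = σ * b * Real.sqrt ξ / (σ * b + a * ξ) := rfl
  have hy : y₁ = Real.sqrt ξ := rfl
  have hz : z₁ = σ * ξ / (σ * b + a * ξ) := rfl
  clear_value ξ x₁ y₁ z₁
  have hξ : ξ = r * b * (s - (r - 1)) := by
    rw [hξdef, hsqrt, hσar]; field_simp; ring
  have hslt : s < r := by nlinarith [hs2, hs0]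
  have hsgt : r - 1 < s := by nlinarith [hs2, hs0]
  have hξpos : 0 < ξ := by
    rw [hξ]; exact mul_pos (mul_pos hr hb) (by linarith)
  have hD : 0 < σ * b + a * ξ := by
    rw [hξ, hσar]
    nlinarith [mul_pos (mul_pos (neg_pos.mpr ha) (mul_pos hr hb)) (sub_pos.mpr hslt)]
  have hDne : σ * b + a * ξ ≠ 0 := ne_of_gt hD
  have hy2 : Real.sqrt ξ ^ 2 = ξ := Real.sq_sqrt hξpos.le
  have hkey : r * σ * b * (σ * b + a * ξ) - (σ * b + a * ξ) ^ 2 - σ ^ 2 * b * ξ = 0 := by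
    rw [hξ, hσar]; linear_combination (-(a ^ 2 * r ^ 2 * b ^ 2)) * hs2
  refine ⟨hξ, hξpos, hD, ⟨?_, ?_, ?_⟩, ⟨?_, ?_, ?_⟩⟩
  · rw [hx, hy, hz]; field_simp; ring
  · rw [hx, hy, hz]; field_simp
    linear_combination Real.sqrt ξ * hkey
  · rw [hx, hy, hz]; field_simp
    linear_combination σ * b / (σ * b + a * ξ) * hy2
  · rw [hx, hy, hz]; field_simp; ring
  · rw [hx, hy, hz]; field_simp
    linear_combination (-(Real.sqrt ξ)) * hkey
  · rw [hx, hy, hz]; field_simp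
    linear_combination σ * b / (σ * b + a * ξ) * hy2
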